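/- Let L^n be a path and let ℓ = min{i : t(i)=2} and s = max{i : t(i)=2} (assuming at least two vertices of threshold 2 exist). Then there exists an optimal TWC target set S such that S ∩ {0,…,ℓ−1} = ∅ = S ∩ {s+1,…,n−1} and both ℓ ∈ S and s ∈ S. -/

import Mathlib

set_option linter.unusedVariables false

open Finset

variable {V : Type*} [Fintype V] [DecidableEq V]

/-- `influenced G t lam S r` : set of influenced nodes after round `r`. -/
def influenced (G : SimpleGraph V) [DecidableRel G.Adj] (t : V → ℕ) (lam : ℕ)
    (S : Finset V) : ℕ → Finset V
  | 0 => S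
  | r + 1 =>
    let prev := influenced G t lam S r
    let A := if r + 1 ≤ lam then prev else prev \ influenced G t lam S (r - lam)
    prev ∪ Finset.univ.filter fun v => t v ≤ (G.neighborFinset v ∩ A).card
  termination_by r => r
  decreasing_by all_goals omega

/-- `activeSet G t lam S r` : set of active nodes at round `r`. -/
def activeSet (G : SimpleGraph V) [DecidableRel G.Adj] (t : V → ℕ) (lam : ℕ)
    (S : Finset V) (r : ℕ) : Finset V :=
  if r = 0 then ∅
  else if r ≤ lam then influenced G t lam S (r - 1)
  else influenced G t lam S (r - 1) \ influenced G t lam S (r - 1 - lam)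

def isTargetSet (G : SimpleGraph V) [DecidableRel G.Adj] (t : V → ℕ) (lam : ℕ)
    (S : Finset V) : Prop :=
  ∃ r, influenced G t lam S r = Finset.univ

def pathGraph (n : ℕ) : SimpleGraph (Fin n) where
  Adj i j := i.val + 1 = j.val ∨ j.val + 1 = i.val
  symm := ⟨fun i j h => h.symm⟩
  loopless := ⟨fun i h => by rcases h with h | h <;> omega⟩

instance (n : ℕ) : DecidableRel (pathGraph n).Adj :=
  fun i j => inferInstanceAs (Decidable (i.val + 1 = j.val ∨ j.val + 1 = i.val))

def ringGraph (n : ℕ) : SimpleGraph (Fin n) where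
  Adj i j := i ≠ j ∧ ((i.val + 1) % n = j.val ∨ (j.val + 1) % n = i.val)
  symm := ⟨fun i j h => ⟨h.1.symm, h.2.symm⟩⟩
  loopless := ⟨fun i h => h.1 rfl⟩

instance (n : ℕ) : DecidableRel (ringGraph n).Adj :=
  fun i j => inferInstanceAs (Decidable (_ ∧ (_ ∨ _)))

instance : DecidableRel (⊤ : SimpleGraph V).Adj :=
  fun a b => inferInstanceAs (Decidable (a ≠ b))


section Infra
variable {n lam : ℕ} {t : Fin n → ℕ}

local notation "II" => influenced (pathGraph n) t lam

lemma infl_zero (S : Finset (Fin n)) : II S 0 = S := by rw [influenced]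

lemma infl_succ (S : Finset (Fin n)) (r : ℕ) :
    II S (r+1) = II S r ∪
      Finset.univ.filter (fun v => t v ≤ ((pathGraph n).neighborFinset v ∩
        (if r + 1 ≤ lam then II S r else II S r \ II S (r - lam))).card) := by
  rw [influenced]

lemma mem_infl_succ {S : Finset (Fin n)} {r : ℕ} {v : Fin n} :
    v ∈ II S (r+1) ↔ v ∈ II S r ∨ t v ≤ ((pathGraph n).neighborFinset v ∩
      (if r + 1 ≤ lam then II S r else II S r \ II S (r - lam))).card := by
  rw [infl_succ]; simp

lemma infl_subset_succ (S : Finset (Fin n)) (r : ℕ) : II S r ⊆ II S (r+1) := by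
  rw [infl_succ]; exact subset_union_left

lemma infl_mono (S : Finset (Fin n)) {r r' : ℕ} (h : r ≤ r') : II S r ⊆ II S r' := by
  induction r' with
  | zero => simpa [Nat.le_zero.mp h] using subset_rfl
  | succ k ih =>
    rcases Nat.lt_or_ge r (k+1) with h' | h'
    · exact (ih (by omega)).trans (infl_subset_succ S k)
    · have : r = k + 1 := by omega
      subst this; exact subset_rfl

lemma seed_subset (S : Finset (Fin n)) (r : ℕ) : S ⊆ II S r := by
  have h := infl_mono (lam := lam) (t := t) S (Nat.zero_le r)
  rwa [infl_zero] at h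

lemma infl_empty (ht : ∀ v, 1 ≤ t v) (r : ℕ) : II ∅ r = ∅ := by
  induction r with
  | zero => exact infl_zero ∅
  | succ k ih =>
    rw [infl_succ, ih]
    ext v
    simp only [mem_union, mem_filter, mem_univ, true_and, notMem_empty, false_or, iff_false]
    intro h
    have h2 : ((pathGraph n).neighborFinset v ∩ (if k + 1 ≤ lam then (∅ : Finset (Fin n)) else ∅ \ II ∅ (k - lam))).card = 0 := by
      split <;> simp
    rw [h2] at h
    have := ht v; omega

lemma path_adj {u v : Fin n} : (pathGraph n).Adj u v ↔ u.val + 1 = v.val ∨ v.val + 1 = u.val :=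
  Iff.rfl

lemma mem_nbhd {u v : Fin n} :
    u ∈ (pathGraph n).neighborFinset v ↔ v.val + 1 = u.val ∨ u.val + 1 = v.val := by
  rw [SimpleGraph.mem_neighborFinset]; exact Iff.rfl

lemma step1 (hlam : 1 ≤ lam) {S : Finset (Fin n)} {r : ℕ} {u : Fin n} (hu : u ∈ II S r)
    {v : Fin n} (hadj : (pathGraph n).Adj v u) (htv : t v = 1) : v ∈ II S (r+1) := by
  have hex : ∃ ρ, u ∈ II S ρ := ⟨r, hu⟩
  set ρ := Nat.find hex with hρdef
  have hρ : u ∈ II S ρ := Nat.find_spec hex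
  have hρle : ρ ≤ r := Nat.find_le hu
  have : v ∈ II S (ρ+1) := by
    rw [mem_infl_succ]
    right
    rw [htv]
    have hmem : u ∈ ((pathGraph n).neighborFinset v ∩
        (if ρ + 1 ≤ lam then II S ρ else II S ρ \ II S (ρ - lam))) := by
      rw [mem_inter]
      refine ⟨(SimpleGraph.mem_neighborFinset _ _ _).2 hadj, ?_⟩
      split
      · exact hρ
      · rw [mem_sdiff]
        refine ⟨hρ, Nat.find_min hex (by omega)⟩
    exact Finset.card_pos.mpr ⟨u, hmem⟩
  exact infl_mono S (by omega) this

lemma both_active {v : Fin n} {A : Finset (Fin n)}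
    (h : 2 ≤ ((pathGraph n).neighborFinset v ∩ A).card) :
    ∃ p q : Fin n, p.val + 1 = v.val ∧ v.val + 1 = q.val ∧ p ∈ A ∧ q ∈ A := by
  obtain ⟨a, ha, b, hb, hab⟩ := Finset.one_lt_card.mp h
  rw [mem_inter, mem_nbhd] at ha hb
  obtain ⟨ha1, ha2⟩ := ha
  obtain ⟨hb1, hb2⟩ := hb
  rcases ha1 with h1 | h1 <;> rcases hb1 with h2 | h2
  · exact absurd (Fin.ext (by omega)) hab
  · exact ⟨b, a, by omega, by omega, hb2, ha2⟩
  · exact ⟨a, b, by omega, by omega, ha2, hb2⟩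
  · exact absurd (Fin.ext (by omega)) hab

lemma active_sub {S : Finset (Fin n)} {r : ℕ} :
    (if r + 1 ≤ lam then II S r else II S r \ II S (r - lam)) ⊆ II S r := by
  split
  · exact subset_rfl
  · exact sdiff_subset

lemma barrier (htv1 : ∀ v, 1 ≤ t v) {c : Fin n} (hc : t c = 2) {S : Finset (Fin n)}
    (hS : ∀ x ∈ S, c < x) : ∀ r, ∀ v ≤ c, v ∉ II S r := by
  intro r
  induction r with
  | zero => intro v hv hmem; rw [infl_zero] at hmem; exact absurd hv (not_le.mpr (hS v hmem))
  | succ k ih =>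
    intro v hv hmem
    rw [mem_infl_succ] at hmem
    rcases hmem with hmem | hmem
    · exact ih v hv hmem
    · set A := (if k + 1 ≤ lam then II S k else II S k \ II S (k - lam)) with hA
      rcases eq_or_lt_of_le hv with heq | hlt
      · subst heq
        rw [hc] at hmem
        obtain ⟨p, q, hp, hq, hpA, hqA⟩ := both_active hmem
        exact ih p (le_of_lt (by rw [Fin.lt_def]; omega)) (active_sub hpA)
      · have h1 : 1 ≤ ((pathGraph n).neighborFinset v ∩ A).card := le_trans (htv1 v) hmem
        obtain ⟨u, hu⟩ := Finset.card_pos.mp h1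
        rw [mem_inter, mem_nbhd] at hu
        have huc : u ≤ c := by rw [Fin.le_def]; rw [Fin.lt_def] at hlt; omega
        exact ih u huc (active_sub hu.2)
lemma localize {b : Fin n} {S : Finset (Fin n)} (hb : b ∈ S) :
    ∀ r, II S r ∩ Finset.Ici b = II (S ∩ Finset.Ici b) r ∩ Finset.Ici b := by
  intro r
  induction r using Nat.strong_induction_on with
  | _ r ih =>
    match r with
    | 0 =>
      rw [infl_zero, infl_zero, inter_assoc, inter_self]
    | (r+1) =>
      have agree : ∀ r' ≤ r, ∀ u : Fin n, b ≤ u →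
          (u ∈ II S r' ↔ u ∈ II (S ∩ Finset.Ici b) r') := by
        intro r' hr' u hu
        have heq := ih r' (by omega)
        constructor <;> intro h
        · have h2 : u ∈ II S r' ∩ Finset.Ici b := mem_inter.mpr ⟨h, mem_Ici.mpr hu⟩
          rw [heq] at h2; exact (mem_inter.mp h2).1
        · have h2 : u ∈ II (S ∩ Finset.Ici b) r' ∩ Finset.Ici b :=
            mem_inter.mpr ⟨h, mem_Ici.mpr hu⟩
          rw [← heq] at h2; exact (mem_inter.mp h2).1
      ext v
      simp only [mem_inter, mem_Ici]
      have key : b ≤ v → (v ∈ II S (r+1) ↔ v ∈ II (S ∩ Finset.Ici b) (r+1)) := by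
        intro hv
        rcases eq_or_lt_of_le hv with heq | hlt
        · subst heq
          exact iff_of_true (seed_subset S _ hb)
            (seed_subset _ _ (mem_inter.mpr ⟨hb, mem_Ici.mpr le_rfl⟩))
        · rw [mem_infl_succ, mem_infl_succ]
          apply or_congr (agree r le_rfl v hv)
          have hA : ((pathGraph n).neighborFinset v ∩
              (if r + 1 ≤ lam then II S r else II S r \ II S (r - lam))) =
              ((pathGraph n).neighborFinset v ∩
              (if r + 1 ≤ lam then II (S ∩ Finset.Ici b) r
               else II (S ∩ Finset.Ici b) r \ II (S ∩ Finset.Ici b) (r - lam))) := by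
            ext u
            simp only [mem_inter]
            apply and_congr_right
            intro hu
            have hbu : b ≤ u := by
              rw [mem_nbhd] at hu
              rw [Fin.le_def]; rw [Fin.lt_def] at hlt; omega
            split
            · exact agree r le_rfl u hbu
            · rw [mem_sdiff, mem_sdiff]
              exact and_congr (agree r le_rfl u hbu)
                (not_congr (agree (r - lam) (by omega) u hbu))
          rw [hA]
      constructor
      · rintro ⟨h1, h2⟩; exact ⟨(key h2).mp h1, h2⟩
      · rintro ⟨h1, h2⟩; exact ⟨(key h2).mpr h1, h2⟩

lemma succ_of_t2 {v : Fin n} (hv2 : t v = 2) {S : Finset (Fin n)} :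
    ∀ r, v ∈ II S r → v ∈ S ∨ ∃ ρ < r, ∃ q : Fin n, v.val + 1 = q.val ∧ q ∈ II S ρ := by
  intro r
  induction r with
  | zero => intro h; rw [infl_zero] at h; exact Or.inl h
  | succ k ih =>
    intro h
    rw [mem_infl_succ] at h
    rcases h with h | h
    · rcases ih h with h | ⟨ρ, hρ, q, hq1, hq2⟩
      · exact Or.inl h
      · exact Or.inr ⟨ρ, by omega, q, hq1, hq2⟩
    · rw [hv2] at h
      obtain ⟨p, q, hp, hq, hpA, hqA⟩ := both_active h
      exact Or.inr ⟨k, by omega, q, hq, active_sub hqA⟩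

lemma dropLeft {l : Fin n} (htv1 : ∀ v, 1 ≤ t v) (hl2 : t l = 2) {S : Finset (Fin n)}
    (hlS : l ∉ S) :
    ∀ r, II S r ∩ Finset.Ioi l = II (S ∩ Finset.Ioi l) r ∩ Finset.Ioi l := by
  have hbarrier : ∀ r, ∀ v ≤ l, v ∉ II (S ∩ Finset.Ioi l) r :=
    barrier htv1 hl2 (fun x hx => mem_Ioi.mp (mem_inter.mp hx).2)
  intro r
  induction r using Nat.strong_induction_on with
  | _ r ih =>
    match r with
    | 0 => rw [infl_zero, infl_zero, inter_assoc, inter_self]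
    | (r+1) =>
      have agree : ∀ r' ≤ r, ∀ u : Fin n, l < u →
          (u ∈ II S r' ↔ u ∈ II (S ∩ Finset.Ioi l) r') := by
        intro r' hr' u hu
        have heq := ih r' (by omega)
        constructor <;> intro h
        · have h2 : u ∈ II S r' ∩ Finset.Ioi l := mem_inter.mpr ⟨h, mem_Ioi.mpr hu⟩
          rw [heq] at h2; exact (mem_inter.mp h2).1
        · have h2 : u ∈ II (S ∩ Finset.Ioi l) r' ∩ Finset.Ioi l :=
            mem_inter.mpr ⟨h, mem_Ioi.mpr hu⟩
          rw [← heq] at h2; exact (mem_inter.mp h2).1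
      -- active set agreement above l
      have agreeA : ∀ u : Fin n, l < u →
          (u ∈ (if r + 1 ≤ lam then II S r else II S r \ II S (r - lam)) ↔
           u ∈ (if r + 1 ≤ lam then II (S ∩ Finset.Ioi l) r
                else II (S ∩ Finset.Ioi l) r \ II (S ∩ Finset.Ioi l) (r - lam))) := by
        intro u hu
        split
        · exact agree r le_rfl u hu
        · rw [mem_sdiff, mem_sdiff]
          exact and_congr (agree r le_rfl u hu)
            (not_congr (agree (r - lam) (by omega) u hu))
      have hlAT : l ∉ (if r + 1 ≤ lam then II (S ∩ Finset.Ioi l) r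
                else II (S ∩ Finset.Ioi l) r \ II (S ∩ Finset.Ioi l) (r - lam)) :=
        fun h => hbarrier r l le_rfl (active_sub h)
      ext v
      simp only [mem_inter, mem_Ioi]
      have key : l < v → (v ∈ II S (r+1) ↔ v ∈ II (S ∩ Finset.Ioi l) (r+1)) := by
        intro hv
        -- classify neighbors of v
        have hnbr : ∀ u ∈ (pathGraph n).neighborFinset v, u = l ∨ l < u := by
          intro u hu
          rw [mem_nbhd] at hu
          rw [Fin.lt_def] at hv ⊢
          rcases hu with hu | hu
          · right; omega
          · rcases Nat.lt_or_ge l.val u.val with h' | h'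
            · right; exact h'
            · left; exact Fin.ext (by omega)
        rw [mem_infl_succ, mem_infl_succ]
        constructor
        · rintro (h | h)
          · exact Or.inl ((agree r le_rfl v hv).mp h)
          · by_cases hlA : l ∈ II S r
            · -- l influenced in S-process: then v = l+1 already influenced earlier, or v far
              rcases Nat.lt_or_ge (l.val + 1) v.val with hfar | hnear
              · -- v ≥ l+2 : l not a neighbor of v, use agreement
                right
                have hsub : ((pathGraph n).neighborFinset v ∩
                    (if r + 1 ≤ lam then II S r else II S r \ II S (r - lam))).card ≤
                    ((pathGraph n).neighborFinset v ∩
                    (if r + 1 ≤ lam then II (S ∩ Finset.Ioi l) r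
                     else II (S ∩ Finset.Ioi l) r \ II (S ∩ Finset.Ioi l) (r - lam))).card := by
                  apply Finset.card_le_card
                  intro u hu
                  rw [mem_inter] at hu ⊢
                  have hul : l < u := by
                    rcases hnbr u hu.1 with h' | h'
                    · exfalso
                      rw [SimpleGraph.mem_neighborFinset] at hu
                      rcases hu.1 with h'' | h'' <;> rw [h'] at h'' <;>
                        rw [Fin.lt_def] at hv <;> omega
                    · exact h'
                  exact ⟨hu.1, (agreeA u hul).mp hu.2⟩
                omega
              · -- v = l + 1 (since l < v ≤ l+1)
                have hveq : v.val = l.val + 1 := by rw [Fin.lt_def] at hv; omega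
                rcases succ_of_t2 hl2 r hlA with hc | ⟨ρ, hρ, q, hq1, hq2⟩
                · exact absurd hc hlS
                · have hqv : q = v := Fin.ext (by omega)
                  subst hqv
                  left
                  exact infl_mono _ (by omega) ((agree ρ (by omega) q hv).mp hq2)
            · -- l not influenced in S-process: neighbor sets agree
              right
              have hsub : ((pathGraph n).neighborFinset v ∩
                  (if r + 1 ≤ lam then II S r else II S r \ II S (r - lam))).card ≤
                  ((pathGraph n).neighborFinset v ∩
                  (if r + 1 ≤ lam then II (S ∩ Finset.Ioi l) r
                   else II (S ∩ Finset.Ioi l) r \ II (S ∩ Finset.Ioi l) (r - lam))).card := by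
                apply Finset.card_le_card
                intro u hu
                rw [mem_inter] at hu ⊢
                rcases hnbr u hu.1 with h' | h'
                · exfalso; subst h'; exact hlA (active_sub hu.2)
                · exact ⟨hu.1, (agreeA u h').mp hu.2⟩
              omega
        · rintro (h | h)
          · exact Or.inl ((agree r le_rfl v hv).mpr h)
          · right
            have hsub : ((pathGraph n).neighborFinset v ∩
                (if r + 1 ≤ lam then II (S ∩ Finset.Ioi l) r
                 else II (S ∩ Finset.Ioi l) r \ II (S ∩ Finset.Ioi l) (r - lam))).card ≤
                ((pathGraph n).neighborFinset v ∩
                (if r + 1 ≤ lam then II S r else II S r \ II S (r - lam))).card := by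
              apply Finset.card_le_card
              intro u hu
              rw [mem_inter] at hu ⊢
              rcases hnbr u hu.1 with h' | h'
              · exfalso; subst h'; exact hlAT hu.2
              · exact ⟨hu.1, (agreeA u h').mpr hu.2⟩
            omega
      constructor
      · rintro ⟨h1, h2⟩; exact ⟨(key h2).mp h1, h2⟩
      · rintro ⟨h1, h2⟩; exact ⟨(key h2).mpr h1, h2⟩

lemma corridorL (hlam : 1 ≤ lam) {S : Finset (Fin n)} {c : Fin n} {r : ℕ}
    (hc : c ∈ II S r) (ht1 : ∀ w : Fin n, w.val < c.val → t w = 1) :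
    ∀ k, ∀ v : Fin n, v.val + k = c.val → v ∈ II S (r + k) := by
  intro k
  induction k with
  | zero => intro v hv; have : v = c := Fin.ext (by omega); subst this; exact hc
  | succ m ih =>
    intro v hv
    have hlt : v.val + 1 < n := by have := c.isLt; omega
    set v' : Fin n := ⟨v.val + 1, hlt⟩ with hv'
    have h1 : v' ∈ II S (r + m) := ih v' (by simp [hv']; omega)
    have hadj : (pathGraph n).Adj v v' := Or.inl rfl
    exact step1 hlam h1 hadj (ht1 v (by omega))

lemma corridorR (hlam : 1 ≤ lam) {S : Finset (Fin n)} {c : Fin n} {r : ℕ}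
    (hc : c ∈ II S r) :
    ∀ k, ∀ v : Fin n, v.val = c.val + k →
      (∀ w : Fin n, c.val < w.val → w.val ≤ v.val → t w = 1) → v ∈ II S (r + k) := by
  intro k
  induction k with
  | zero => intro v hv _; have : v = c := Fin.ext (by omega); subst this; exact hc
  | succ m ih =>
    intro v hv ht1
    have hpos : 0 < v.val := by omega
    set v' : Fin n := ⟨v.val - 1, by omega⟩ with hv'
    have h1 : v' ∈ II S (r + m) := by
      refine ih v' (by simp [hv']; omega) (fun w hw1 hw2 => ht1 w hw1 (by simp [hv'] at hw2; omega))
    have hadj : (pathGraph n).Adj v v' := Or.inr (by simp [hv']; omega)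
    exact step1 hlam h1 hadj (ht1 v (by omega) le_rfl)

lemma rev_adj {u v : Fin n} : (pathGraph n).Adj u.rev v.rev ↔ (pathGraph n).Adj u v := by
  rw [path_adj, path_adj, Fin.val_rev, Fin.val_rev]
  have := u.isLt; have := v.isLt
  omega

lemma rev_nbhd (v : Fin n) :
    (pathGraph n).neighborFinset v.rev = Finset.image Fin.rev ((pathGraph n).neighborFinset v) := by
  ext u
  rw [SimpleGraph.mem_neighborFinset, Finset.mem_image]
  constructor
  · intro h
    refine ⟨u.rev, ?_, Fin.rev_rev u⟩
    rw [SimpleGraph.mem_neighborFinset]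
    apply rev_adj.mp
    rwa [Fin.rev_rev]
  · rintro ⟨w, hw, rfl⟩
    rw [SimpleGraph.mem_neighborFinset] at hw
    exact rev_adj.mpr hw

lemma rev_influenced (S : Finset (Fin n)) :
    ∀ r, influenced (pathGraph n) (fun v => t v.rev) lam (S.image Fin.rev) r =
      (II S r).image Fin.rev := by
  intro r
  induction r using Nat.strong_induction_on with
  | _ r ih =>
    match r with
    | 0 => rw [infl_zero, infl_zero]
    | (r+1) =>
      rw [infl_succ, infl_succ, Finset.image_union]
      congr 1
      · exact ih r (by omega)
      · ext u
        simp only [Finset.mem_filter, Finset.mem_univ, true_and, Finset.mem_image]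
        have hAeq : (if r + 1 ≤ lam then influenced (pathGraph n) (fun v => t v.rev) lam (S.image Fin.rev) r
            else influenced (pathGraph n) (fun v => t v.rev) lam (S.image Fin.rev) r \
              influenced (pathGraph n) (fun v => t v.rev) lam (S.image Fin.rev) (r - lam)) =
            Finset.image Fin.rev (if r + 1 ≤ lam then II S r else II S r \ II S (r - lam)) := by
          split
          · exact ih r (by omega)
          · rw [ih r (by omega), ih (r - lam) (by omega),
              ← Finset.image_sdiff _ _ Fin.rev_injective]
        rw [hAeq]
        have hcard : ((pathGraph n).neighborFinset u ∩
            Finset.image Fin.rev (if r + 1 ≤ lam then II S r else II S r \ II S (r - lam))).card =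
            ((pathGraph n).neighborFinset u.rev ∩
            (if r + 1 ≤ lam then II S r else II S r \ II S (r - lam))).card := by
          conv_lhs => rw [show u = u.rev.rev from (Fin.rev_rev u).symm]
          rw [rev_nbhd, ← Finset.image_inter _ _ Fin.rev_injective,
            Finset.card_image_of_injective _ Fin.rev_injective]
        rw [hcard]
        constructor
        · intro h
          exact ⟨u.rev, h, Fin.rev_rev u⟩
        · rintro ⟨w, hw, rfl⟩
          rwa [Fin.rev_rev]
lemma exchangeLeft (hlam : 1 ≤ lam) (htv : ∀ v, t v = 1 ∨ t v = 2)
    {l : Fin n} (hl2 : t l = 2) (hmin' : ∀ w : Fin n, w.val < l.val → t w = 1)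
    (hl1 : l.val + 1 < n)
    {S : Finset (Fin n)} (hS : ∃ R, II S R = Finset.univ) :
    (∃ R, II ((S ∩ Finset.Ici l) ∪ {l}) R = Finset.univ) ∧
      ((S ∩ Finset.Ici l) ∪ {l}).card ≤ S.card := by
  have htv1 : ∀ v, 1 ≤ t v := fun v => by rcases htv v with h | h <;> omega
  obtain ⟨R, hR⟩ := hS
  by_cases hlS : l ∈ S
  · -- easy case : l ∈ S
    have hS1 : (S ∩ Finset.Ici l) ∪ {l} = S ∩ Finset.Ici l := by
      apply Finset.union_eq_left.mpr
      simp only [Finset.singleton_subset_iff, mem_inter, mem_Ici]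
      exact ⟨hlS, le_rfl⟩
    rw [hS1]
    constructor
    · refine ⟨R + n, ?_⟩
      rw [Finset.eq_univ_iff_forall]
      intro v
      have hloc := localize (t := t) (lam := lam) hlS R
      rcases Nat.lt_or_ge v.val l.val with hv | hv
      · -- v < l : corridor from l
        have hl0 : l ∈ II (S ∩ Finset.Ici l) 0 := by
          rw [infl_zero]; exact mem_inter.mpr ⟨hlS, mem_Ici.mpr le_rfl⟩
        have := corridorL hlam hl0 hmin' (l.val - v.val) v (by omega)
        exact infl_mono _ (by have := l.isLt; omega) this
      · have hv1 : v ∈ II S R ∩ Finset.Ici l := by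
          rw [hR]; exact mem_inter.mpr ⟨mem_univ v, mem_Ici.mpr (Fin.le_def.mpr hv)⟩
        rw [hloc] at hv1
        exact infl_mono _ (by omega) (mem_inter.mp hv1).1
    · exact Finset.card_le_card inter_subset_left
  · -- hard case : l ∉ S
    set T := S ∩ Finset.Ioi l with hT
    have hST : S ∩ Finset.Ici l = T := by
      ext x
      simp only [hT, mem_inter, mem_Ici, mem_Ioi]
      constructor
      · rintro ⟨hx1, hx2⟩
        refine ⟨hx1, lt_of_le_of_ne hx2 (fun h => hlS (h ▸ hx1))⟩
      · rintro ⟨hx1, hx2⟩; exact ⟨hx1, le_of_lt hx2⟩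
    rw [hST]
    have hdrop := dropLeft (lam := lam) htv1 hl2 hlS
    have hTcov : ∀ v : Fin n, l < v → v ∈ II T R := by
      intro v hv
      have h1 : v ∈ II S R ∩ Finset.Ioi l := by
        rw [hR]; exact mem_inter.mpr ⟨mem_univ v, mem_Ioi.mpr hv⟩
      rw [hdrop R] at h1
      exact (mem_inter.mp h1).1
    have hTne : T.Nonempty := by
      by_contra hne
      rw [Finset.not_nonempty_iff_eq_empty] at hne
      have hv0 : (⟨l.val + 1, hl1⟩ : Fin n) ∈ II T R :=
        hTcov _ (by rw [Fin.lt_def]; simp)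
      rw [hne, infl_empty htv1] at hv0
      exact absurd hv0 (Finset.notMem_empty _)
    set b := T.min' hTne with hb
    have hbT : b ∈ T := T.min'_mem hTne
    have hbl : l < b := mem_Ioi.mp (mem_inter.mp hbT).2
    have hbmin : ∀ x ∈ T, b ≤ x := fun x hx => T.min'_le x hx
    have ht1corr : ∀ w : Fin n, l.val < w.val → w.val < b.val → t w = 1 := by
      intro w hw1 hw2
      rcases htv w with h | h
      · exact h
      · exfalso
        have hbar := barrier (lam := lam) htv1 h (S := T)
          (fun x hx => lt_of_lt_of_le (Fin.lt_def.mpr hw2) (hbmin x hx))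
        exact hbar R w le_rfl (hTcov w (Fin.lt_def.mpr hw1))
    have hlT : l ∉ T := fun h => hlS (mem_inter.mp h).1
    have hlS1 : l ∈ T ∪ {l} := Finset.mem_union_right _ (Finset.mem_singleton_self l)
    have hbS1 : b ∈ T ∪ {l} := Finset.mem_union_left _ hbT
    have hS1b : (T ∪ {l}) ∩ Finset.Ici b = T ∩ Finset.Ici b := by
      ext x
      simp only [mem_inter, mem_union, Finset.mem_singleton, mem_Ici]
      constructor
      · rintro ⟨hx1 | rfl, hx2⟩
        · exact ⟨hx1, hx2⟩
        · exact absurd hx2 (not_le.mpr hbl)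
      · rintro ⟨hx1, hx2⟩; exact ⟨Or.inl hx1, hx2⟩
    constructor
    · refine ⟨R + n, ?_⟩
      rw [Finset.eq_univ_iff_forall]
      intro v
      rcases Nat.lt_or_ge v.val l.val with hv | hv
      · -- v < l
        have hl0 : l ∈ II (T ∪ {l}) 0 := by rw [infl_zero]; exact hlS1
        have := corridorL hlam hl0 hmin' (l.val - v.val) v (by omega)
        exact infl_mono _ (by have := l.isLt; omega) this
      rcases Nat.eq_or_lt_of_le hv with hv' | hv'
      · -- v = l
        have : v = l := Fin.ext hv'.symm
        subst this
        exact seed_subset _ _ hlS1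
      rcases Nat.lt_or_ge v.val b.val with hvb | hvb
      · -- l < v < b : corridor right from l
        have hl0 : l ∈ II (T ∪ {l}) 0 := by rw [infl_zero]; exact hlS1
        have := corridorR hlam hl0 (v.val - l.val) v (by omega)
          (fun w hw1 hw2 => ht1corr w hw1 (by omega))
        exact infl_mono _ (by have := v.isLt; omega) this
      · -- b ≤ v
        have h1 : v ∈ II T R ∩ Finset.Ici b :=
          mem_inter.mpr ⟨hTcov v (Fin.lt_def.mpr (by omega)), mem_Ici.mpr (Fin.le_def.mpr hvb)⟩
        rw [localize hbT R] at h1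
        have h2 : v ∈ II ((T ∪ {l}) ∩ Finset.Ici b) R ∩ Finset.Ici b := by rwa [hS1b]
        rw [← localize hbS1 R] at h2
        exact infl_mono _ (by omega) (mem_inter.mp h2).1
    · -- cardinality
      obtain ⟨x, hxS, hxl⟩ : ∃ x ∈ S, x < l := by
        by_contra hcon
        push_neg at hcon
        have hgt : ∀ x ∈ S, l < x := fun x hx =>
          lt_of_le_of_ne (hcon x hx) (fun hh => hlS (by rw [hh]; exact hx))
        have hbar := barrier (lam := lam) htv1 hl2 hgt R l le_rfl
        rw [hR] at hbar
        exact hbar (mem_univ l)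
      have hxT : x ∉ T := by
        simp only [hT, mem_inter, mem_Ioi]
        rintro ⟨_, h⟩
        exact absurd (lt_trans hxl h) (lt_irrefl x)
      have hsub : insert x T ⊆ S := by
        intro y hy
        rcases Finset.mem_insert.mp hy with rfl | hy
        · exact hxS
        · exact (mem_inter.mp hy).1
      calc (T ∪ {l}).card ≤ T.card + ({l} : Finset (Fin n)).card := Finset.card_union_le _ _
        _ = T.card + 1 := by rw [Finset.card_singleton]
        _ = (insert x T).card := (Finset.card_insert_of_notMem hxT).symm
        _ ≤ S.card := Finset.card_le_card hsub
end Infra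

/-- on a path, with `l` the smallest and `s` the largest index of
threshold-2 vertices (at least two such vertices), there is an optimal TWC
target set contained in `{l,…,s}` that contains both `l` and `s`. -/
theorem stmt6 (n lam : ℕ) (hn : 2 ≤ n) (hlam : 1 ≤ lam) (t : Fin n → ℕ)
    (htv : ∀ v, t v = 1 ∨ t v = 2)
    (h0 : t ⟨0, by omega⟩ = 1) (hlast : t ⟨n - 1, by omega⟩ = 1)
    (l s : Fin n) (hls : l ≠ s) (htl : t l = 2) (hts : t s = 2)
    (hmin : ∀ v, t v = 2 → l ≤ v) (hmax : ∀ v, t v = 2 → v ≤ s) :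
    ∃ S : Finset (Fin n), isTargetSet (pathGraph n) t lam S ∧
      (∀ S' : Finset (Fin n), isTargetSet (pathGraph n) t lam S' → S.card ≤ S'.card) ∧
      (∀ v ∈ S, l ≤ v ∧ v ≤ s) ∧ l ∈ S ∧ s ∈ S := by
  classical
  have hlt : l < s := lt_of_le_of_ne (hmax l htl) hls
  have hltv : l.val < s.val := Fin.lt_def.mp hlt
  have hl1 : l.val + 1 < n := by have := s.isLt; omega
  have hmin' : ∀ w : Fin n, w.val < l.val → t w = 1 := by
    intro w hw
    rcases htv w with h | h
    · exact h
    · exact absurd (Fin.le_def.mp (hmin w h)) (by omega)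
  -- existence of an optimal target set
  set C : Set ℕ := {k | ∃ S : Finset (Fin n), isTargetSet (pathGraph n) t lam S ∧ S.card = k}
    with hC
  have hCne : C.Nonempty :=
    ⟨(Finset.univ : Finset (Fin n)).card, Finset.univ, ⟨0, by rw [infl_zero]⟩, rfl⟩
  obtain ⟨S₀, hS₀t, hS₀card⟩ := Nat.sInf_mem hCne
  have hopt : ∀ S' : Finset (Fin n), isTargetSet (pathGraph n) t lam S' → sInf C ≤ S'.card :=
    fun S' h => Nat.sInf_le ⟨S', h, rfl⟩
  -- left exchange
  obtain ⟨hS₁t, hS₁card⟩ := exchangeLeft hlam htv htl hmin' hl1 hS₀t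
  set S₁ : Finset (Fin n) := (S₀ ∩ Finset.Ici l) ∪ {l} with hS₁
  have hlmemS₁ : l ∈ S₁ := Finset.mem_union_right _ (Finset.mem_singleton_self l)
  have hS₁sub : ∀ w ∈ S₁, l ≤ w := by
    intro w hw
    rcases Finset.mem_union.mp hw with h | h
    · exact Finset.mem_Ici.mp (Finset.mem_inter.mp h).2
    · rw [Finset.mem_singleton.mp h]
  -- reversal
  set t' : Fin n → ℕ := fun v => t v.rev with ht'
  set l' : Fin n := s.rev with hl'
  have hrevuniv : (Finset.univ : Finset (Fin n)).image Fin.rev = Finset.univ :=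
    Finset.image_univ_of_surjective Fin.rev_involutive.surjective
  have hS₁t' : ∃ R, influenced (pathGraph n) t' lam (S₁.image Fin.rev) R = Finset.univ := by
    obtain ⟨R, hR⟩ := hS₁t
    exact ⟨R, by rw [rev_influenced S₁ R, hR, hrevuniv]⟩
  have ht'l' : t' l' = 2 := by
    show t s.rev.rev = 2
    rw [Fin.rev_rev]; exact hts
  have hmin'' : ∀ w : Fin n, w.val < l'.val → t' w = 1 := by
    intro w hw
    rcases htv w.rev with h | h
    · exact h
    · exfalso
      have h2 := Fin.le_def.mp (hmax w.rev h)
      rw [Fin.val_rev] at h2 hw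
      have := w.isLt; have := s.isLt
      omega
  have hl1' : l'.val + 1 < n := by
    rw [hl', Fin.val_rev]
    have := s.isLt
    omega
  obtain ⟨hS₂t', hS₂card'⟩ := exchangeLeft (t := t') hlam
    (fun v => htv v.rev) ht'l' hmin'' hl1' hS₁t'
  set S₂' : Finset (Fin n) := (S₁.image Fin.rev ∩ Finset.Ici l') ∪ {l'} with hS₂'
  set S₂ : Finset (Fin n) := S₂'.image Fin.rev with hS₂
  have ht''eq : (fun v : Fin n => t' v.rev) = t := funext fun v => by
    show t v.rev.rev = t v
    rw [Fin.rev_rev]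
  refine ⟨S₂, ?_, ?_, ?_, ?_, ?_⟩
  · -- target set
    obtain ⟨R, hR⟩ := hS₂t'
    refine ⟨R, ?_⟩
    have h := rev_influenced (t := t') (lam := lam) S₂' R
    rw [ht''eq, hR, hrevuniv] at h
    exact h
  · -- optimality
    intro S' hS'
    have h1 : S₂.card = S₂'.card := Finset.card_image_of_injective _ Fin.rev_injective
    have h2 : (S₁.image Fin.rev).card = S₁.card :=
      Finset.card_image_of_injective _ Fin.rev_injective
    calc S₂.card ≤ S₁.card := by omega
      _ ≤ S₀.card := hS₁card
      _ = sInf C := hS₀card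
      _ ≤ S'.card := hopt S' hS'
  · -- bounds
    intro v hv
    obtain ⟨u, hu, rfl⟩ := Finset.mem_image.mp hv
    rcases Finset.mem_union.mp hu with h | h
    · obtain ⟨h1, h2⟩ := Finset.mem_inter.mp h
      obtain ⟨w, hw, rfl⟩ := Finset.mem_image.mp h1
      rw [Fin.rev_rev]
      refine ⟨hS₁sub w hw, ?_⟩
      have := Finset.mem_Ici.mp h2
      exact Fin.rev_le_rev.mp (by rwa [hl'] at this)
    · rw [Finset.mem_singleton.mp h, hl', Fin.rev_rev]
      exact ⟨le_of_lt hlt, le_rfl⟩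
  · -- l ∈ S₂
    have h1 : l.rev ∈ S₁.image Fin.rev := Finset.mem_image_of_mem _ hlmemS₁
    have h2 : l' ≤ l.rev := by rw [hl']; exact Fin.rev_le_rev.mpr (le_of_lt hlt)
    have h3 : l.rev ∈ S₂' := Finset.mem_union_left _
      (Finset.mem_inter.mpr ⟨h1, Finset.mem_Ici.mpr h2⟩)
    have := Finset.mem_image_of_mem Fin.rev h3
    rwa [Fin.rev_rev] at this
  · -- s ∈ S₂
    have h3 : l' ∈ S₂' := Finset.mem_union_right _ (Finset.mem_singleton_self l')
    have := Finset.mem_image_of_mem Fin.rev h3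
    rwa [hl', Fin.rev_rev] at this
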